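/- Fix x ∈ ℝ^n, c ∈ ℝ, and an index j. Let a, a' ∈ ℝ^n with a ≠ 0, a'_k = a_k for all k ≠ j, 0 ≤ a_j ≤ a'_j, x_j ≥ 0, and c − a·x ≥ 0. Then (c − a'·x)/‖a'‖₂ ≤ (c − a·x)/‖a‖₂; that is, increasing a nonnegative j-th coordinate when x_j ≥ 0 does not increase the value of the function f(a) = (c − a·x)/‖a‖₂. -/
import Mathlib

open Matrix Finset

/-- Monotonicity of `f(a) = (c − a·x)/‖a‖₂`: increasing a nonnegative
`j`-th coordinate of `a` when `x_j ≥ 0` does not increase the value of `f`. -/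
theorem monotone_coord_dot_div_norm
    {n : ℕ} (x : Fin n → ℝ) (c : ℝ) (j : Fin n) (a a' : Fin n → ℝ)
    (ha : a ≠ 0)
    (hk : ∀ k, k ≠ j → a' k = a k)
    (haj : 0 ≤ a j) (haj' : a j ≤ a' j)
    (hx : 0 ≤ x j)
    (hc : 0 ≤ c - a ⬝ᵥ x) :
    (c - a' ⬝ᵥ x) / Real.sqrt (∑ k, (a' k) ^ 2) ≤
      (c - a ⬝ᵥ x) / Real.sqrt (∑ k, (a k) ^ 2) := by
  have hsum_pos : 0 < ∑ k, (a k) ^ 2 := by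
    have : ∃ k, a k ≠ 0 := by
      by_contra h
      push_neg at h
      exact ha (funext h)
    obtain ⟨k, hk0⟩ := this
    have : (0:ℝ) < (a k)^2 := by positivity
    exact lt_of_lt_of_le this (Finset.single_le_sum (f := fun k => (a k)^2)
      (fun i _ => sq_nonneg _) (Finset.mem_univ k))
  have hsum_le : ∑ k, (a k) ^ 2 ≤ ∑ k, (a' k) ^ 2 := by
    apply Finset.sum_le_sum
    intro i _
    by_cases hij : i = j
    · subst hij
      exact pow_le_pow_left₀ haj haj' 2
    · rw [hk i hij]
  have hsum'_pos : 0 < ∑ k, (a' k) ^ 2 := lt_of_lt_of_le hsum_pos hsum_le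
  have hsq_pos : 0 < Real.sqrt (∑ k, (a k) ^ 2) := Real.sqrt_pos.mpr hsum_pos
  have hsq'_pos : 0 < Real.sqrt (∑ k, (a' k) ^ 2) := Real.sqrt_pos.mpr hsum'_pos
  have hsq_le : Real.sqrt (∑ k, (a k) ^ 2) ≤ Real.sqrt (∑ k, (a' k) ^ 2) :=
    Real.sqrt_le_sqrt hsum_le
  have hdot : a ⬝ᵥ x ≤ a' ⬝ᵥ x := by
    apply Finset.sum_le_sum
    intro i _
    by_cases hij : i = j
    · subst hij
      exact mul_le_mul_of_nonneg_right haj' hx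
    · rw [hk i hij]
  have hnum : c - a' ⬝ᵥ x ≤ c - a ⬝ᵥ x := by linarith
  rcases le_or_gt (c - a' ⬝ᵥ x) 0 with h | h
  · calc (c - a' ⬝ᵥ x) / Real.sqrt (∑ k, (a' k) ^ 2) ≤ 0 :=
          div_nonpos_of_nonpos_of_nonneg h hsq'_pos.le
      _ ≤ (c - a ⬝ᵥ x) / Real.sqrt (∑ k, (a k) ^ 2) := div_nonneg hc hsq_pos.le
  · exact div_le_div₀ hc hnum hsq_pos hsq_le
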